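/- Let G be a finite simple graph with diameter at most 2 and minimum degree δ ≥ 2. Then G has an edge cut of size δ that is not the set of all edges incident to a single vertex if and only if the vertex set of G can be partitioned into three sets A, B, C such that: the induced subgraph G[A] is a complete graph on δ vertices and |B ∪ C| ≥ δ; each vertex in A has exactly one neighbour in B and no neighbours in C; each vertex in B has at least one neighbour in A; and each vertex in B is adjacent to each vertex in C. -/

import Mathlib

open Finset
set_option linter.unusedSectionVars false
set_option maxHeartbeats 1000000

section helpers
variable {V : Type*} [Fintype V] [DecidableEq V] {G : SimpleGraph V} [DecidableRel G.Adj]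

private lemma deg_split (v : V) (S : Finset V) :
    G.degree v = (S.filter (G.Adj v)).card + (Sᶜ.filter (G.Adj v)).card := by
  rw [← SimpleGraph.card_neighborFinset_eq_degree, SimpleGraph.neighborFinset_eq_filter,
    ← Finset.card_inter_add_card_sdiff (Finset.univ.filter (G.Adj v)) S]
  congr 1
  · congr 1; ext x; simp [And.comm]
  · congr 1; ext x; simp [And.comm]

private lemma sum_cross (S T : Finset V) :
    ∑ v ∈ S, (T.filter (G.Adj v)).card = ((S ×ˢ T).filter fun p => G.Adj p.1 p.2).card := by
  rw [Finset.card_eq_sum_card_fiberwise (f := Prod.fst) (t := S)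
    (fun p hp => (Finset.mem_product.1 (Finset.mem_filter.1 hp).1).1)]
  refine Finset.sum_congr rfl fun v hv => ?_
  refine Finset.card_nbij (fun b => (v, b)) ?_ ?_ ?_
  · intro b hb
    have hb : b ∈ T.filter (G.Adj v) := hb
    show (v, b) ∈ ((S ×ˢ T).filter fun p => G.Adj p.1 p.2).filter (fun p => p.1 = v)
    simp only [Finset.mem_filter, Finset.mem_product] at hb ⊢
    exact ⟨⟨⟨hv, hb.1⟩, hb.2⟩, trivial⟩
  · intro b hb b' hb' h; exact congrArg Prod.snd h
  · intro p hp
    simp only [Finset.mem_coe, Finset.mem_filter, Finset.mem_product, Set.mem_image,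
      Finset.coe_filter, Set.mem_setOf_eq] at hp ⊢
    obtain ⟨⟨⟨hp1, hp2⟩, hadj⟩, hfst⟩ := hp
    exact ⟨p.2, ⟨hp2, hfst ▸ hadj⟩, by rw [← hfst]⟩

private lemma cross_injOn (S : Finset V) :
    Set.InjOn (fun p : V × V => s(p.1, p.2))
      ((S ×ˢ Sᶜ).filter fun p => G.Adj p.1 p.2) := by
  intro p hp q hq h
  simp only [Finset.coe_filter, Set.mem_setOf_eq, Finset.mem_product, Finset.mem_compl] at hp hq
  obtain ⟨⟨hp1, hp2⟩, -⟩ := hp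
  obtain ⟨⟨hq1, hq2⟩, -⟩ := hq
  rw [Sym2.eq_iff] at h
  rcases h with ⟨h1, h2⟩ | ⟨h1, h2⟩
  · exact Prod.ext h1 h2
  · exact absurd (h1 ▸ hp1) hq2

private lemma cross_le {F : Finset (Sym2 V)} (S : Finset V)
    (hcross : ∀ a ∈ S, ∀ b ∈ Sᶜ, G.Adj a b → s(a, b) ∈ F) :
    ((S ×ˢ Sᶜ).filter fun p => G.Adj p.1 p.2).card ≤ F.card := by
  refine Finset.card_le_card_of_injOn (fun p => s(p.1, p.2)) ?_ (cross_injOn S)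
  intro p hp
  have hp : p ∈ (S ×ˢ Sᶜ).filter fun p => G.Adj p.1 p.2 := hp
  simp only [Finset.mem_filter, Finset.mem_product] at hp
  exact hcross p.1 hp.1.1 p.2 hp.1.2 hp.2

private lemma not_single {F : Finset (Sym2 V)} {δ : ℕ} (hδ : δ = G.minDegree)
    (hFc : F.card = δ)
    (hni : ¬ ∃ v : V, (F : Set (Sym2 V)) = G.incidenceSet v)
    (a : V) (hall : ∀ b, G.Adj a b → s(a, b) ∈ F) : False := by
  refine hni ⟨a, ?_⟩
  have hsub : G.incidenceFinset a ⊆ F := by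
    intro e he
    rw [SimpleGraph.mem_incidenceFinset] at he
    obtain ⟨he1, he2⟩ := he
    obtain ⟨b, rfl⟩ := Sym2.mem_iff_exists.1 he2
    exact hall b he1
  have hcard : F.card ≤ (G.incidenceFinset a).card := by
    rw [SimpleGraph.card_incidenceFinset_eq_degree, hFc, hδ]
    exact G.minDegree_le_degree a
  have heq := Finset.eq_of_subset_of_card_le hsub hcard
  rw [← heq]
  ext e
  simp [SimpleGraph.mem_incidenceFinset]

private lemma adj_mid (hconn : G.Connected) (hdiam : ∀ u v : V, G.dist u v ≤ 2)
    {x y : V} (hxy : x ≠ y) (hnadj : ¬ G.Adj x y) : ∃ w, G.Adj x w ∧ G.Adj w y := by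
  have h1 : G.dist x y ≠ 1 := fun h => hnadj ((SimpleGraph.dist_eq_one_iff_adj).1 h)
  have h0 : G.dist x y ≠ 0 := fun h => hxy ((hconn x y).dist_eq_zero_iff.1 h)
  have hle := hdiam x y
  have h2 : G.dist x y = 2 := by omega
  obtain ⟨p, hp⟩ := (hconn x y).exists_walk_length_eq_dist
  rw [h2] at hp
  cases p with
  | nil => simp at hp
  | cons hadj q =>
    cases q with
    | nil => simp at hp
    | cons hadj' r =>
      cases r with
      | nil => exact ⟨_, hadj, hadj'⟩
      | cons h3 r' => simp [SimpleGraph.Walk.length_cons] at hp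

private lemma walk_stays {G' : SimpleGraph V} {A : Set V}
    (h : ∀ u v, G'.Adj u v → u ∈ A → v ∈ A) {x y : V} (hx : x ∈ A)
    (hr : G'.Reachable x y) : y ∈ A := by
  obtain ⟨w⟩ := hr
  induction w with
  | nil => exact hx
  | cons hadj p ih => exact ih (h _ _ hadj hx)

private lemma core
    (hconn : G.Connected) (hdiam : ∀ u v : V, G.dist u v ≤ 2)
    {δ : ℕ} (hδ : δ = G.minDegree) (hδ2 : 2 ≤ δ)
    {F : Finset (Sym2 V)} (hFc : F.card = δ)
    (hni : ¬ ∃ v : V, (F : Set (Sym2 V)) = G.incidenceSet v)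
    (S : Finset V) (hS : S.Nonempty) (hT : Sᶜ.Nonempty)
    (hcross : ∀ a ∈ S, ∀ b ∈ Sᶜ, G.Adj a b → s(a, b) ∈ F)
    (hevery : ∀ a ∈ S, ∃ b ∈ Sᶜ, G.Adj a b) :
    ∃ A B C : Set V,
        A ∪ B ∪ C = Set.univ ∧ Disjoint A B ∧ Disjoint A C ∧ Disjoint B C ∧
        Nat.card A = δ ∧ A.Pairwise G.Adj ∧
        δ ≤ Nat.card ((B ∪ C : Set V)) ∧
        (∀ a ∈ A, (∃! b, b ∈ B ∧ G.Adj a b) ∧ ∀ c ∈ C, ¬ G.Adj a c) ∧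
        (∀ b ∈ B, ∃ a ∈ A, G.Adj a b) ∧
        (∀ b ∈ B, ∀ c ∈ C, G.Adj b c) := by
  -- degree lower bound
  have hdeg : ∀ v : V, δ ≤ G.degree v := fun v => hδ ▸ G.minDegree_le_degree v
  set k := S.card with hk
  -- S is not a single vertex
  have hk1 : k ≠ 1 := by
    intro h1
    obtain ⟨a, rfl⟩ := Finset.card_eq_one.1 h1
    refine not_single hδ hFc hni a fun b hb => ?_
    have hba : b ∈ ({a} : Finset V)ᶜ := by
      simp only [Finset.mem_compl, Finset.mem_singleton]
      exact fun h => G.irrefl (h ▸ hb)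
    exact hcross a (Finset.mem_singleton_self a) b hba hb
  have hk2 : 2 ≤ k := by
    have := Finset.card_pos.2 hS
    omega
  -- crossing count X
  set X := ∑ v ∈ S, (Sᶜ.filter (G.Adj v)).card with hX
  have hXδ : X ≤ δ := by
    rw [hX, sum_cross]
    exact hFc ▸ cross_le S hcross
  have hkX : k ≤ X := by
    rw [hX, hk]
    calc S.card = ∑ _v ∈ S, 1 := by simp
    _ ≤ _ := Finset.sum_le_sum fun v hv => by
        obtain ⟨b, hb, hab⟩ := hevery v hv
        exact Finset.card_pos.2 ⟨b, Finset.mem_filter.2 ⟨hb, hab⟩⟩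
  -- inner sum P
  set P := ∑ v ∈ S, (S.filter (G.Adj v)).card with hP
  have hPbound : ∀ v ∈ S, (S.filter (G.Adj v)).card ≤ k - 1 := by
    intro v hv
    have hsub : S.filter (G.Adj v) ⊆ S.erase v := by
      intro w hw
      rw [Finset.mem_filter] at hw
      exact Finset.mem_erase.2 ⟨fun h => G.irrefl (h ▸ hw.2), hw.1⟩
    calc (S.filter (G.Adj v)).card ≤ (S.erase v).card := Finset.card_le_card hsub
    _ = k - 1 := by rw [Finset.card_erase_of_mem hv]
  have hPle : P ≤ k * (k - 1) := by
    calc P ≤ ∑ _v ∈ S, (k - 1) := Finset.sum_le_sum hPbound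
    _ = k * (k - 1) := by simp [mul_comm, hk]
  have hsum : δ * k ≤ P + X := by
    calc δ * k = ∑ _v ∈ S, δ := by simp [mul_comm, hk]
    _ ≤ ∑ v ∈ S, G.degree v := Finset.sum_le_sum fun v _ => hdeg v
    _ = P + X := by
        rw [hP, hX, ← Finset.sum_add_distrib]
        exact Finset.sum_congr rfl fun v _ => deg_split v S
  -- k = δ
  have hkδ : k = δ := by
    rcases lt_or_eq_of_le (le_trans hkX hXδ) with hlt | heq
    · exfalso
      have h1 : δ * k ≤ k * (k - 1) + δ := le_trans hsum (by omega)
      have h2 : δ * (k - 1) ≤ k * (k - 1) := by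
        have : δ * k = δ * (k - 1) + δ := by
          have : k - 1 + 1 = k := by omega
          calc δ * k = δ * (k - 1 + 1) := by rw [this]
          _ = δ * (k - 1) + δ := by ring
        omega
      have h3 : δ ≤ k := Nat.le_of_mul_le_mul_right
        (by rwa [mul_comm δ, mul_comm k] at h2) (by omega)
      omega
    · exact heq
  -- X = δ and P = δ * (δ - 1)
  have hXeq : X = δ := le_antisymm hXδ (hkδ ▸ hkX)
  have hPeq : P = k * (k - 1) := by
    refine le_antisymm hPle ?_
    have : δ * k = k * (k - 1) + δ := by
      subst hkδ
      cases k with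
      | zero => omega
      | succ n => simp [Nat.succ_sub_one]; ring
    omega
  -- every vertex of S has exactly one neighbour outside S
  have hone : ∀ v ∈ S, (Sᶜ.filter (G.Adj v)).card = 1 := by
    intro v hv
    by_contra hne
    have hge : 1 ≤ (Sᶜ.filter (G.Adj v)).card := by
      obtain ⟨b, hb, hab⟩ := hevery v hv
      exact Finset.card_pos.2 ⟨b, Finset.mem_filter.2 ⟨hb, hab⟩⟩
    have hlt : ∑ _v ∈ S, 1 < X := by
      refine Finset.sum_lt_sum (fun w hw => ?_) ⟨v, hv, by omega⟩
      obtain ⟨b, hb, hab⟩ := hevery w hw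
      exact Finset.card_pos.2 ⟨b, Finset.mem_filter.2 ⟨hb, hab⟩⟩
    simp only [Finset.sum_const, smul_eq_mul, mul_one] at hlt
    omega
  -- S is a clique
  have hclique : ∀ v ∈ S, ∀ w ∈ S, v ≠ w → G.Adj v w := by
    have hall : ∀ v ∈ S, (S.filter (G.Adj v)).card = k - 1 := by
      intro v hv
      by_contra hne
      have hlt : P < ∑ _v ∈ S, (k - 1) :=
        Finset.sum_lt_sum (fun w hw => hPbound w hw)
          ⟨v, hv, lt_of_le_of_ne (hPbound v hv) hne⟩
      simp only [Finset.sum_const, smul_eq_mul] at hlt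
      rw [← hk] at hlt
      omega
    intro v hv w hw hvw
    have herase : S.filter (G.Adj v) = S.erase v := by
      refine Finset.eq_of_subset_of_card_le ?_ ?_
      · intro x hx
        rw [Finset.mem_filter] at hx
        exact Finset.mem_erase.2 ⟨fun h => G.irrefl (h ▸ hx.2), hx.1⟩
      · rw [Finset.card_erase_of_mem hv, hall v hv]
    have : w ∈ S.filter (G.Adj v) := herase ▸ Finset.mem_erase.2 ⟨hvw.symm, hw⟩
    exact (Finset.mem_filter.1 this).2
  -- crossing condition for the complement
  have hcross' : ∀ a ∈ Sᶜ, ∀ b ∈ Sᶜᶜ, G.Adj a b → s(a, b) ∈ F := by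
    intro a ha b hb hab
    rw [compl_compl] at hb
    rw [Sym2.eq_swap]
    exact hcross b hb a ha hab.symm
  set m := Sᶜ.card with hm
  have hm1 : m ≠ 1 := by
    intro h1
    obtain ⟨t, ht⟩ := Finset.card_eq_one.1 h1
    refine not_single hδ hFc hni t fun b hb => ?_
    have hbS : b ∈ S := by
      by_contra hbS
      have hmem : b ∈ Sᶜ := Finset.mem_compl.2 hbS
      rw [ht, Finset.mem_singleton] at hmem
      exact G.irrefl (hmem ▸ hb)
    rw [Sym2.eq_swap]
    exact hcross b hbS t (by rw [ht]; exact Finset.mem_singleton_self t) hb.symm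
  have hmδ : δ ≤ m := by
    have hX'le : ∑ t ∈ Sᶜ, (Sᶜᶜ.filter (G.Adj t)).card ≤ δ := by
      rw [sum_cross]
      exact hFc ▸ cross_le Sᶜ hcross'
    have hQbound : ∀ v ∈ Sᶜ, (Sᶜ.filter (G.Adj v)).card ≤ m - 1 := by
      intro v hv
      have hsub : Sᶜ.filter (G.Adj v) ⊆ Sᶜ.erase v := fun w hw => by
        rw [Finset.mem_filter] at hw
        exact Finset.mem_erase.2 ⟨fun h => G.irrefl (h ▸ hw.2), hw.1⟩
      calc _ ≤ (Sᶜ.erase v).card := Finset.card_le_card hsub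
      _ = m - 1 := by rw [Finset.card_erase_of_mem hv, ← hm]
    have hsum' : δ * m ≤ m * (m - 1) + δ := by
      calc δ * m = ∑ _v ∈ Sᶜ, δ := by simp [mul_comm, ← hm]
      _ ≤ ∑ v ∈ Sᶜ, G.degree v := Finset.sum_le_sum fun v _ => hdeg v
      _ = (∑ v ∈ Sᶜ, (Sᶜ.filter (G.Adj v)).card)
            + ∑ v ∈ Sᶜ, (Sᶜᶜ.filter (G.Adj v)).card := by
          rw [← Finset.sum_add_distrib]
          exact Finset.sum_congr rfl fun v _ => deg_split v Sᶜ
      _ ≤ m * (m - 1) + δ := by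
          refine add_le_add ?_ hX'le
          calc _ ≤ ∑ _v ∈ Sᶜ, (m - 1) := Finset.sum_le_sum hQbound
          _ = m * (m - 1) := by simp [mul_comm, ← hm]
    have hm2 : 2 ≤ m := by
      have := Finset.card_pos.2 hT
      omega
    have hrw : δ * m = δ * (m - 1) + δ := by
      have hme : m - 1 + 1 = m := by omega
      calc δ * m = δ * (m - 1 + 1) := by rw [hme]
      _ = δ * (m - 1) + δ := by ring
    have h2' : δ * (m - 1) ≤ m * (m - 1) := by omega
    exact Nat.le_of_mul_le_mul_right
      (by rwa [mul_comm δ, mul_comm m] at h2') (by omega)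
  -- uniqueness of the outside neighbour
  have huniq : ∀ a ∈ S, ∀ t ∈ Sᶜ, ∀ t' ∈ Sᶜ, G.Adj a t → G.Adj a t' → t = t' := by
    intro a ha t ht t' ht' h1 h2
    exact Finset.card_le_one.1 (le_of_eq (hone a ha)) t
      (Finset.mem_filter.2 ⟨ht, h1⟩) t' (Finset.mem_filter.2 ⟨ht', h2⟩)
  set Bf := Sᶜ.filter (fun t => ∃ a ∈ S, G.Adj a t) with hBfdef
  set Cf := Sᶜ \ Bf with hCfdef
  have hBfT : Bf ⊆ Sᶜ := Finset.filter_subset _ _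
  refine ⟨↑S, ↑Bf, ↑Cf, ?_, ?_, ?_, ?_, ?_, ?_, ?_, ?_, ?_, ?_⟩
  · ext x
    simp only [Set.mem_union, Set.mem_univ, iff_true, Finset.mem_coe]
    by_cases hx : x ∈ S
    · exact Or.inl (Or.inl hx)
    · by_cases hb : x ∈ Bf
      · exact Or.inl (Or.inr hb)
      · exact Or.inr (Finset.mem_sdiff.2 ⟨Finset.mem_compl.2 hx, hb⟩)
  · rw [Finset.disjoint_coe, Finset.disjoint_left]
    intro a ha hb
    exact Finset.mem_compl.1 (hBfT hb) ha
  · rw [Finset.disjoint_coe, Finset.disjoint_left]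
    intro a ha hc
    exact Finset.mem_compl.1 (Finset.mem_sdiff.1 hc).1 ha
  · rw [Finset.disjoint_coe, Finset.disjoint_left]
    intro a ha hc
    exact (Finset.mem_sdiff.1 hc).2 ha
  · rw [Nat.card_coe_set_eq, Set.ncard_coe_finset, ← hk]
    exact hkδ
  · intro a ha b hb hab
    exact hclique a ha b hb hab
  · have hun : (↑Bf ∪ ↑Cf : Set V) = ↑(Sᶜ) := by
      ext x
      simp only [Set.mem_union, Finset.mem_coe]
      constructor
      · rintro (hx | hx)
        · exact hBfT hx
        · exact (Finset.mem_sdiff.1 hx).1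
      · intro hx
        by_cases hb : x ∈ Bf
        · exact Or.inl hb
        · exact Or.inr (Finset.mem_sdiff.2 ⟨hx, hb⟩)
    rw [hun, Nat.card_coe_set_eq, Set.ncard_coe_finset, ← hm]
    exact hmδ
  · intro a ha
    rw [Finset.mem_coe] at ha
    obtain ⟨b, hb, hab⟩ := hevery a ha
    have hbBf : b ∈ Bf := Finset.mem_filter.2 ⟨hb, a, ha, hab⟩
    constructor
    · refine ⟨b, ⟨hbBf, hab⟩, ?_⟩
      rintro y ⟨hy, hay⟩
      exact huniq a ha y (hBfT hy) b hb hay hab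
    · intro c hc hac
      rw [Finset.mem_coe, Finset.mem_sdiff] at hc
      exact hc.2 (Finset.mem_filter.2 ⟨hc.1, a, ha, hac⟩)
  · intro b hb
    rw [Finset.mem_coe, Finset.mem_filter] at hb
    obtain ⟨-, a, ha, hab⟩ := hb
    exact ⟨a, ha, hab⟩
  · intro b hb c hc
    rw [Finset.mem_coe, Finset.mem_filter] at hb
    obtain ⟨hbT, a, ha, hab⟩ := hb
    rw [Finset.mem_coe, Finset.mem_sdiff] at hc
    obtain ⟨hcT, hcB⟩ := hc
    have hac : a ≠ c := fun h => Finset.mem_compl.1 hcT (h ▸ ha)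
    have hnac : ¬ G.Adj a c := fun h => hcB (Finset.mem_filter.2 ⟨hcT, a, ha, h⟩)
    obtain ⟨w, haw, hwc⟩ := adj_mid hconn hdiam hac hnac
    have hwT : w ∈ Sᶜ := by
      by_contra hwS
      rw [Finset.mem_compl, not_not] at hwS
      exact hcB (Finset.mem_filter.2 ⟨hcT, w, hwS, hwc⟩)
    have hwb : w = b := huniq a ha w hwT b hbT haw hab
    exact hwb ▸ hwc

end helpers

theorem delta_edge_cut_characterisation
    {V : Type*} [Fintype V] [Nonempty V] (G : SimpleGraph V) [DecidableRel G.Adj]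
    (hconn : G.Connected) (hdiam : ∀ u v : V, G.dist u v ≤ 2)
    (δ : ℕ) (hδ : δ = G.minDegree) (hδ2 : 2 ≤ δ) :
    (∃ F : Finset (Sym2 V), (F : Set (Sym2 V)) ⊆ G.edgeSet ∧ F.card = δ ∧
        ¬ (G.deleteEdges (F : Set (Sym2 V))).Connected ∧
        ¬ ∃ v : V, (F : Set (Sym2 V)) = G.incidenceSet v) ↔
    (∃ A B C : Set V,
        A ∪ B ∪ C = Set.univ ∧ Disjoint A B ∧ Disjoint A C ∧ Disjoint B C ∧
        Nat.card A = δ ∧ A.Pairwise G.Adj ∧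
        δ ≤ Nat.card ((B ∪ C : Set V)) ∧
        (∀ a ∈ A, (∃! b, b ∈ B ∧ G.Adj a b) ∧ ∀ c ∈ C, ¬ G.Adj a c) ∧
        (∀ b ∈ B, ∃ a ∈ A, G.Adj a b) ∧
        (∀ b ∈ B, ∀ c ∈ C, G.Adj b c)) := by
  classical
  constructor
  · rintro ⟨F, hFE, hFc, hdisc, hni⟩
    rw [SimpleGraph.connected_iff] at hdisc
    have hnp : ¬ (G.deleteEdges (F : Set (Sym2 V))).Preconnected :=
      fun h => hdisc ⟨h, inferInstance⟩
    unfold SimpleGraph.Preconnected at hnp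
    push_neg at hnp
    obtain ⟨u, v, huv⟩ := hnp
    set G' := G.deleteEdges (F : Set (Sym2 V)) with hG'
    set S : Finset V := Finset.univ.filter (fun w => G'.Reachable u w) with hSdef
    have huS : u ∈ S := by
      rw [hSdef, Finset.mem_filter]
      exact ⟨Finset.mem_univ u, SimpleGraph.Reachable.refl u⟩
    have hvT : v ∈ Sᶜ := by
      rw [Finset.mem_compl, hSdef, Finset.mem_filter]
      exact fun h => huv h.2
    have hcross : ∀ a ∈ S, ∀ b ∈ Sᶜ, G.Adj a b → s(a, b) ∈ F := by
      intro a ha b hb hab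
      by_contra hne
      have hadj' : G'.Adj a b := by
        rw [hG', SimpleGraph.deleteEdges_adj]
        exact ⟨hab, by simpa using hne⟩
      have hra : G'.Reachable u a := by
        rw [hSdef, Finset.mem_filter] at ha
        exact ha.2
      have hrb : G'.Reachable u b := hra.trans hadj'.reachable
      rw [Finset.mem_compl, hSdef, Finset.mem_filter] at hb
      exact hb ⟨Finset.mem_univ b, hrb⟩
    have hS : S.Nonempty := ⟨u, huS⟩
    have hT : Sᶜ.Nonempty := ⟨v, hvT⟩
    by_cases hev : ∀ a ∈ S, ∃ b ∈ Sᶜ, G.Adj a b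
    · exact core hconn hdiam hδ hδ2 hFc hni S hS hT hcross hev
    · push_neg at hev
      obtain ⟨s0, hs0S, hs0⟩ := hev
      have hev' : ∀ a ∈ Sᶜ, ∃ b ∈ Sᶜᶜ, G.Adj a b := by
        intro t ht
        have hst : s0 ≠ t := fun h => (Finset.mem_compl.1 ht) (h ▸ hs0S)
        have hnst : ¬ G.Adj s0 t := fun h => hs0 t ht h
        obtain ⟨w, hw1, hw2⟩ := adj_mid hconn hdiam hst hnst
        have hwS : w ∈ S := by
          by_contra hwS
          exact hs0 w (Finset.mem_compl.2 hwS) hw1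
        exact ⟨w, by rwa [compl_compl], hw2.symm⟩
      have hcross' : ∀ a ∈ Sᶜ, ∀ b ∈ Sᶜᶜ, G.Adj a b → s(a, b) ∈ F := by
        intro a ha b hb hab
        rw [compl_compl] at hb
        rw [Sym2.eq_swap]
        exact hcross b hb a ha hab.symm
      exact core hconn hdiam hδ hδ2 hFc hni Sᶜ hT (by rwa [compl_compl]) hcross' hev'
  · rintro ⟨A, B, C, hun, hAB, hAC, hBC, hcardA, hpair, hcardBC, hA, hB, hBCadj⟩
    set Af : Finset V := A.toFinset with hAf
    have hmemAf : ∀ x, x ∈ Af ↔ x ∈ A := by simp [hAf]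
    have hAfc : Af.card = δ := by
      rw [hAf, ← Set.ncard_eq_toFinset_card', ← Nat.card_coe_set_eq]
      exact hcardA
    have hcompl : ∀ x, x ∉ A → x ∈ B ∪ C := by
      intro x hx
      have hx2 : x ∈ A ∪ B ∪ C := hun ▸ Set.mem_univ x
      rcases hx2 with (h | h) | h
      · exact absurd h hx
      · exact Or.inl h
      · exact Or.inr h
    have hkey : ∀ a ∈ A, ∀ t, t ∉ A → G.Adj a t → t ∈ B := by
      intro a ha t htA hat
      rcases hcompl t htA with h | h
      · exact h
      · exact absurd hat ((hA a ha).2 t h)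
    set cp : Finset (V × V) := (Af ×ˢ Afᶜ).filter (fun p => G.Adj p.1 p.2) with hcp
    have hfib : ∀ a ∈ Af, (Afᶜ.filter (G.Adj a)).card = 1 := by
      intro a ha
      rw [hmemAf] at ha
      obtain ⟨b, ⟨hbB, hab⟩, hbu⟩ := (hA a ha).1
      rw [Finset.card_eq_one]
      refine ⟨b, ?_⟩
      ext t
      simp only [Finset.mem_filter, Finset.mem_compl, hmemAf, Finset.mem_singleton]
      constructor
      · rintro ⟨htA, hat⟩
        exact hbu t ⟨hkey a ha t htA hat, hat⟩
      · rintro rfl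
        exact ⟨fun hbA => (Set.disjoint_left.1 hAB hbA) hbB, hab⟩
    have hcpcard : cp.card = δ := by
      rw [hcp, ← sum_cross]
      calc ∑ a ∈ Af, (Afᶜ.filter (G.Adj a)).card = ∑ _a ∈ Af, 1 :=
            Finset.sum_congr rfl hfib
      _ = Af.card := by simp
      _ = δ := hAfc
    have hedge : ∀ e ∈ cp.image (fun p => s(p.1, p.2)),
        ∃ a b, a ∈ A ∧ b ∈ B ∧ G.Adj a b ∧ e = s(a, b) := by
      intro e he
      rw [Finset.mem_image] at he
      obtain ⟨p, hp, rfl⟩ := he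
      rw [hcp, Finset.mem_filter, Finset.mem_product] at hp
      have hp1 : p.1 ∈ A := (hmemAf _).1 hp.1.1
      have hp2 : p.2 ∉ A := fun h => Finset.mem_compl.1 hp.1.2 ((hmemAf _).2 h)
      exact ⟨p.1, p.2, hp1, hkey p.1 hp1 p.2 hp2 hp.2, hp.2, rfl⟩
    have hedgeA : ∀ a ∈ A, ∃ b, b ∈ B ∧ G.Adj a b ∧
        s(a, b) ∈ cp.image (fun p => s(p.1, p.2)) := by
      intro a ha
      obtain ⟨b, ⟨hbB, hab⟩, -⟩ := (hA a ha).1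
      refine ⟨b, hbB, hab, ?_⟩
      rw [Finset.mem_image]
      refine ⟨(a, b), Finset.mem_filter.2 ⟨Finset.mem_product.2
        ⟨(hmemAf _).2 ha, Finset.mem_compl.2
          (fun h => Set.disjoint_left.1 hAB ((hmemAf _).1 h) hbB)⟩, hab⟩, rfl⟩
    refine ⟨cp.image (fun p => s(p.1, p.2)), ?_, ?_, ?_, ?_⟩
    · intro e he
      simp only [Finset.coe_image, Set.mem_image, Finset.mem_coe] at he
      obtain ⟨p, hp, rfl⟩ := he
      rw [hcp, Finset.mem_filter] at hp
      exact hp.2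
    · rw [Finset.card_image_of_injOn (cross_injOn Af), hcpcard]
    · intro hcon
      have hAfne : Af.Nonempty := Finset.card_pos.1 (by omega)
      obtain ⟨a0, ha0f⟩ := hAfne
      have ha0 : a0 ∈ A := (hmemAf _).1 ha0f
      have hx0 : ∃ x, x ∈ B ∪ C := by
        by_contra h
        push_neg at h
        have he : (B ∪ C : Set V) = ∅ := Set.eq_empty_iff_forall_notMem.2 h
        rw [he] at hcardBC
        simp at hcardBC
        omega
      obtain ⟨x0, hx0⟩ := hx0
      have hreach := hcon.preconnected a0 x0
      have hstay : ∀ u' v',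
          (G.deleteEdges ((cp.image fun p => s(p.1, p.2)) : Set (Sym2 V))).Adj u' v' →
          u' ∈ A → v' ∈ A := by
        intro u' v' hadj hu'
        rw [SimpleGraph.deleteEdges_adj] at hadj
        obtain ⟨hadj, hne⟩ := hadj
        by_contra hv'
        refine hne ?_
        simp only [Finset.coe_image, Set.mem_image, Finset.mem_coe]
        exact ⟨(u', v'), Finset.mem_filter.2 ⟨Finset.mem_product.2
          ⟨(hmemAf _).2 hu', Finset.mem_compl.2 (fun h => hv' ((hmemAf _).1 h))⟩,
          hadj⟩, rfl⟩
      have hx0A := walk_stays hstay ha0 hreach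
      rcases hx0 with h | h
      · exact Set.disjoint_left.1 hAB hx0A h
      · exact Set.disjoint_left.1 hAC hx0A h
    · rintro ⟨v, hv⟩
      have hvmem : ∀ e ∈ cp.image (fun p => s(p.1, p.2)), v ∈ e := by
        intro e he
        have h2 : e ∈ ((cp.image fun p => s(p.1, p.2)) : Set (Sym2 V)) := he
        rw [hv] at h2
        exact h2.2
      have h2A : ∃ a1 ∈ A, ∃ a2 ∈ A, a1 ≠ a2 := by
        have hlt : 1 < Af.card := by omega
        obtain ⟨a1, ha1, a2, ha2, hne⟩ := Finset.one_lt_card.1 hlt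
        exact ⟨a1, (hmemAf _).1 ha1, a2, (hmemAf _).1 ha2, hne⟩
      obtain ⟨a1, ha1, a2, ha2, ha12⟩ := h2A
      have hvnotA : v ∉ A := by
        intro hvA
        obtain ⟨b1, hb1, hab1, he1⟩ := hedgeA a1 ha1
        obtain ⟨b2, hb2, hab2, he2⟩ := hedgeA a2 ha2
        have h1 := hvmem _ he1
        have h2 := hvmem _ he2
        rw [Sym2.mem_iff] at h1 h2
        rcases h1 with rfl | rfl
        · rcases h2 with rfl | rfl
          · exact ha12 rfl
          · exact Set.disjoint_left.1 hAB hvA hb2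
        · exact Set.disjoint_left.1 hAB hvA hb1
      have hvB : v ∈ B := by
        obtain ⟨b1, hb1, hab1, he1⟩ := hedgeA a1 ha1
        have h1 := hvmem _ he1
        rw [Sym2.mem_iff] at h1
        rcases h1 with rfl | rfl
        · exact absurd ha1 hvnotA
        · exact hb1
      have hbv : ∀ a ∈ A, G.Adj a v := by
        intro a ha
        obtain ⟨b, hbB, hab, he⟩ := hedgeA a ha
        have h1 := hvmem _ he
        rw [Sym2.mem_iff] at h1
        rcases h1 with rfl | rfl
        · exact absurd ha hvnotA
        · exact hab
      have hBv : ∀ b ∈ B, b = v := by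
        intro b hb
        obtain ⟨a, ha, hab⟩ := hB b hb
        obtain ⟨b', ⟨hb'B, hab'⟩, hbu⟩ := (hA a ha).1
        have h1 : b = b' := hbu b ⟨hb, hab⟩
        have h2 : v = b' := hbu v ⟨hvB, hbv a ha⟩
        rw [h1, ← h2]
      have hCne : C.Nonempty := by
        rcases Set.eq_empty_or_nonempty C with h | h
        · exfalso
          have hsub : B ∪ C ⊆ {v} := by
            rw [h, Set.union_empty]
            intro b hb
            exact hBv b hb
          have hle := Set.ncard_le_ncard hsub (Set.finite_singleton v)
          rw [Set.ncard_singleton] at hle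
          rw [Nat.card_coe_set_eq] at hcardBC
          omega
        · exact h
      obtain ⟨c, hc⟩ := hCne
      have hadjvc : G.Adj v c := hBCadj v hvB c hc
      have hinc : s(v, c) ∈ G.incidenceSet v := (G.mem_incidenceSet v c).2 hadjvc
      rw [← hv] at hinc
      obtain ⟨a, b, haA, hbB, -, heq⟩ := hedge _ (Finset.mem_coe.1 hinc)
      rw [Sym2.eq_iff] at heq
      rcases heq with ⟨h1, h2⟩ | ⟨h1, h2⟩
      · exact hvnotA (h1 ▸ haA)
      · exact Set.disjoint_left.1 hAC haA (h2 ▸ hc)
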